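/- Let ν : [0,∞) → [0,∞) be a nondecreasing function, positive on (0,∞), satisfying limsup_{s→0+} (∫_0^s ν(t)/t dt)/ν(s) < ∞. Then for every α with 0 < α ≤ 1, the series ∑_{j=1}^∞ ν(2^{-j})^α converges. -/

import Mathlib

open Filter MeasureTheory

private lemma piece_bound (ν : ℝ → ℝ) (hmono : MonotoneOn ν (Set.Ici 0))
    {c s : ℝ} (hc : 0 < c) (hcs : c ≤ s)
    (hI : IntegrableOn (fun t => ν t / t) (Set.Ioc c s)) :
    ν c * (Real.log s - Real.log c) ≤ ∫ t in Set.Ioc c s, ν t / t := by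
  have hs : 0 < s := hc.trans_le hcs
  have hcont : ContinuousOn (fun t : ℝ => ν c / t) (Set.Icc c s) :=
    continuousOn_const.div continuousOn_id (fun t ht => (hc.trans_le ht.1).ne')
  have hint1 : IntegrableOn (fun t : ℝ => ν c / t) (Set.Ioc c s) :=
    (hcont.integrableOn_Icc).mono_set Set.Ioc_subset_Icc_self
  have h0 : (0:ℝ) ∉ Set.uIcc c s := by
    rw [Set.uIcc_of_le hcs]
    exact fun h => absurd h.1 (not_le.2 hc)
  have h1 : ∫ t in Set.Ioc c s, ν c / t = ν c * (Real.log s - Real.log c) := by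
    rw [← intervalIntegral.integral_of_le hcs]
    simp_rw [div_eq_mul_inv]
    rw [intervalIntegral.integral_const_mul, integral_inv h0,
      Real.log_div hs.ne' hc.ne']
  rw [← h1]
  apply setIntegral_mono_on hint1 hI measurableSet_Ioc
  intro t ht
  have htpos : 0 < t := hc.trans ht.1
  have hνle : ν c ≤ ν t := hmono hc.le htpos.le ht.1.le
  gcongr

theorem stmt3 (ν : ℝ → ℝ) (hmono : MonotoneOn ν (Set.Ici 0))
    (hnonneg : ∀ t, 0 ≤ t → 0 ≤ ν t) (hpos : ∀ t, 0 < t → 0 < ν t)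
    (hint : ∃ s₀ > (0:ℝ), IntegrableOn (fun t => ν t / t) (Set.Ioc 0 s₀))
    (hlimsup : ∃ M : ℝ, ∀ᶠ s in nhdsWithin 0 (Set.Ioi 0),
      (∫ t in Set.Ioc (0:ℝ) s, ν t / t) / ν s ≤ M) :
    ∀ α : ℝ, 0 < α → α ≤ 1 →
      Summable (fun j : ℕ => ν ((2:ℝ) ^ (-((j:ℤ) + 1))) ^ α) := by
  obtain ⟨s₀, hs₀, hI₀⟩ := hint
  obtain ⟨M, hM⟩ := hlimsup
  rw [eventually_nhdsWithin_iff, Metric.eventually_nhds_iff] at hM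
  obtain ⟨ε, hε, hMε⟩ := hM
  set a : ℕ → ℝ := fun k => ν ((2:ℝ) ^ (-(k:ℤ))) with ha_def
  have hxpos : ∀ z : ℤ, (0:ℝ) < 2 ^ z := fun z => zpow_pos two_pos z
  have hapos : ∀ k, 0 < a k := fun k => hpos _ (hxpos _)
  have hl2 : (0:ℝ) < Real.log 2 := Real.log_pos one_lt_two
  have hdy : ∀ {m n : ℤ}, m ≤ n → (2:ℝ) ^ (-n) ≤ (2:ℝ) ^ (-m) := fun h =>
    zpow_le_zpow_right₀ one_le_two (neg_le_neg h)
  -- choose J with 2^{-J} < min ε s₀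
  obtain ⟨J, hJ⟩ : ∃ J : ℕ, (2:ℝ) ^ (-(J:ℤ)) < min ε s₀ := by
    obtain ⟨n, hn⟩ := exists_pow_lt_of_lt_one (lt_min hε hs₀) (by norm_num : (1:ℝ)/2 < 1)
    refine ⟨n, ?_⟩
    have : (2:ℝ) ^ (-(n:ℤ)) = (1/2:ℝ) ^ n := by
      rw [zpow_neg, zpow_natCast, one_div, inv_pow]
    rw [this]; exact hn
  -- key estimate
  have key : ∀ j : ℕ, J ≤ j → ∀ n : ℕ,
      ∑ i ∈ Finset.range n, a (j+1+i) ≤ (max (M / Real.log 2) 1) * a j := by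
    intro j hj n
    have hjz : (J:ℤ) ≤ (j:ℤ) := by exact_mod_cast hj
    have hsj : (2:ℝ) ^ (-(j:ℤ)) < min ε s₀ := lt_of_le_of_lt (hdy hjz) hJ
    have hsjε : (2:ℝ) ^ (-(j:ℤ)) < ε := hsj.trans_le (min_le_left _ _)
    have hsjs₀ : (2:ℝ) ^ (-(j:ℤ)) ≤ s₀ := (hsj.trans_le (min_le_right _ _)).le
    have hIj : IntegrableOn (fun t => ν t / t) (Set.Ioc 0 ((2:ℝ) ^ (-(j:ℤ)))) :=
      hI₀.mono_set (Set.Ioc_subset_Ioc_right hsjs₀)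
    -- Step A: induction
    have stepA : ∀ n : ℕ, Real.log 2 * ∑ i ∈ Finset.range n, a (j+1+i)
        ≤ ∫ t in Set.Ioc ((2:ℝ) ^ (-((j:ℤ)+(n:ℤ)))) ((2:ℝ) ^ (-(j:ℤ))), ν t / t := by
      intro n
      induction n with
      | zero => simp
      | succ n ih =>
        have hle1 : (2:ℝ) ^ (-((j:ℤ)+(n:ℤ)+1)) ≤ (2:ℝ) ^ (-((j:ℤ)+(n:ℤ))) :=
          hdy (by linarith)
        have hle2 : (2:ℝ) ^ (-((j:ℤ)+(n:ℤ))) ≤ (2:ℝ) ^ (-(j:ℤ)) :=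
          hdy (le_add_of_nonneg_right (by positivity))
        have hsub1 : Set.Ioc ((2:ℝ) ^ (-((j:ℤ)+(n:ℤ)+1))) ((2:ℝ) ^ (-((j:ℤ)+(n:ℤ))))
            ⊆ Set.Ioc 0 s₀ :=
          Set.Ioc_subset_Ioc (hxpos _).le ((hle2.trans hsjs₀))
        have hint1 : IntegrableOn (fun t => ν t / t)
            (Set.Ioc ((2:ℝ) ^ (-((j:ℤ)+(n:ℤ)+1))) ((2:ℝ) ^ (-((j:ℤ)+(n:ℤ))))) :=
          hI₀.mono_set hsub1
        have hint2 : IntegrableOn (fun t => ν t / t)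
            (Set.Ioc ((2:ℝ) ^ (-((j:ℤ)+(n:ℤ)))) ((2:ℝ) ^ (-(j:ℤ)))) :=
          hI₀.mono_set (Set.Ioc_subset_Ioc (hxpos _).le hsjs₀)
        have hsplit : Set.Ioc ((2:ℝ) ^ (-((j:ℤ)+(n:ℤ)+1))) ((2:ℝ) ^ (-(j:ℤ)))
            = Set.Ioc ((2:ℝ) ^ (-((j:ℤ)+(n:ℤ)+1))) ((2:ℝ) ^ (-((j:ℤ)+(n:ℤ))))
              ∪ Set.Ioc ((2:ℝ) ^ (-((j:ℤ)+(n:ℤ)))) ((2:ℝ) ^ (-(j:ℤ))) :=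
          (Set.Ioc_union_Ioc_eq_Ioc hle1 hle2).symm
        have hdisj : Disjoint
            (Set.Ioc ((2:ℝ) ^ (-((j:ℤ)+(n:ℤ)+1))) ((2:ℝ) ^ (-((j:ℤ)+(n:ℤ)))))
            (Set.Ioc ((2:ℝ) ^ (-((j:ℤ)+(n:ℤ)))) ((2:ℝ) ^ (-(j:ℤ)))) :=
          Set.Ioc_disjoint_Ioc_of_le le_rfl
        have hpiece := piece_bound ν hmono (hxpos (-((j:ℤ)+(n:ℤ)+1))) hle1 hint1
        have hlog : Real.log ((2:ℝ) ^ (-((j:ℤ)+(n:ℤ))))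
            - Real.log ((2:ℝ) ^ (-((j:ℤ)+(n:ℤ)+1))) = Real.log 2 := by
          rw [Real.log_zpow, Real.log_zpow]; push_cast; ring
        have hν : ν ((2:ℝ) ^ (-((j:ℤ)+(n:ℤ)+1))) = a (j+1+n) := by
          have : (-((j:ℤ)+(n:ℤ)+1)) = -(((j+1+n:ℕ)):ℤ) := by push_cast; ring
          rw [ha_def]; rw [this]
        rw [hlog, hν] at hpiece
        have hexp : (-((j:ℤ)+((n+1:ℕ):ℤ))) = (-((j:ℤ)+(n:ℤ)+1)) := by push_cast; ring
        rw [hexp, Finset.sum_range_succ, hsplit,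
          setIntegral_union hdisj measurableSet_Ioc hint1 hint2]
        linarith
    -- Step B: extend to Ioc 0 sj
    have hnonnegae : (0:ℝ → ℝ) ≤ᶠ[ae (volume.restrict (Set.Ioc (0:ℝ) ((2:ℝ) ^ (-(j:ℤ)))))]
        (fun t => ν t / t) := by
      filter_upwards [ae_restrict_mem measurableSet_Ioc] with t ht
      exact div_nonneg (hnonneg t ht.1.le) ht.1.le
    have stepB : ∀ n : ℕ,
        (∫ t in Set.Ioc ((2:ℝ) ^ (-((j:ℤ)+(n:ℤ)))) ((2:ℝ) ^ (-(j:ℤ))), ν t / t)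
        ≤ ∫ t in Set.Ioc (0:ℝ) ((2:ℝ) ^ (-(j:ℤ))), ν t / t := by
      intro n
      apply setIntegral_mono_set hIj hnonnegae
      exact (Set.Ioc_subset_Ioc_left (hxpos _).le).eventuallyLE
    -- Step C: limsup bound
    have stepC : (∫ t in Set.Ioc (0:ℝ) ((2:ℝ) ^ (-(j:ℤ))), ν t / t) ≤ M * a j := by
      have hmem : (2:ℝ) ^ (-(j:ℤ)) ∈ Set.Ioi (0:ℝ) := hxpos _
      have hdist : dist ((2:ℝ) ^ (-(j:ℤ))) (0:ℝ) < ε := by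
        rw [Real.dist_eq, sub_zero, abs_of_pos (hxpos _)]; exact hsjε
      have := hMε hdist hmem
      rw [div_le_iff₀ (hapos j)] at this
      exact this
    have h := (stepA n).trans ((stepB n).trans stepC)
    have h2 : ∑ i ∈ Finset.range n, a (j+1+i) ≤ (M / Real.log 2) * a j := by
      rw [div_mul_eq_mul_div, le_div_iff₀ hl2]
      linarith
    exact h2.trans (mul_le_mul_of_nonneg_right (le_max_left _ _) (hapos j).le)
  set C : ℝ := max (M / Real.log 2) 1 with hC_def
  have hC1 : (1:ℝ) ≤ C := le_max_right _ _
  have hCpos : (0:ℝ) < C := lt_of_lt_of_le one_pos hC1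
  -- summability of a
  have hsum0 : Summable (fun i => a (J+1+i)) :=
    summable_of_sum_range_le (fun i => (hapos _).le) (fun n => key J le_rfl n)
  have hA : Summable a := by
    have : Summable (fun i => a (i + (J+1))) := by
      simpa [Nat.add_comm] using hsum0
    exact (summable_nat_add_iff (J+1)).1 this
  have htail : ∀ m : ℕ, Summable (fun i => a (m + i)) := by
    intro m
    have := (summable_nat_add_iff m).2 hA
    simpa [Nat.add_comm] using this
  set T : ℕ → ℝ := fun j => ∑' i, a (j+1+i) with hT_def
  have hT_nonneg : ∀ j, 0 ≤ T j := fun j => tsum_nonneg fun i => (hapos _).le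
  have hT_le : ∀ j, J ≤ j → T j ≤ C * a j := fun j hj =>
    Summable.tsum_le_of_sum_range_le (htail (j+1)) (key j hj)
  have hT_rec : ∀ j, T j = a (j+1) + T (j+1) := by
    intro j
    have h := Summable.tsum_eq_zero_add (htail (j+1))
    have e2 : ∀ i, j+1+(i+1) = (j+1)+1+i := fun i => by omega
    calc T j = ∑' i, a (j+1+i) := rfl
      _ = a (j+1+0) + ∑' i, a (j+1+(i+1)) := h
      _ = a (j+1) + ∑' i, a ((j+1)+1+i) := by
          congr 1
          exact tsum_congr fun i => by rw [e2 i]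
      _ = a (j+1) + T (j+1) := rfl
  set r : ℝ := C / (C+1) with hr_def
  have hr0 : (0:ℝ) < r := div_pos hCpos (by linarith)
  have hr1 : r < 1 := (div_lt_one (by linarith)).2 (by linarith)
  have hTgeo : ∀ m : ℕ, T (J+m) ≤ r ^ m * T J := by
    intro m
    induction m with
    | zero => simp
    | succ m ih =>
      have hrec := hT_rec (J+m)
      have h1 : T (J+m+1) ≤ C * a (J+m+1) := hT_le (J+m+1) (by omega)
      have h2 : (C+1) * T (J+m+1) ≤ C * T (J+m) := by nlinarith [hT_nonneg (J+m+1)]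
      have h3 : T (J+m+1) ≤ r * T (J+m) := by
        rw [hr_def, div_mul_eq_mul_div, le_div_iff₀ (by linarith : (0:ℝ) < C+1)]
        linarith
      calc T (J+(m+1)) = T (J+m+1) := by ring_nf
        _ ≤ r * T (J+m) := h3
        _ ≤ r * (r ^ m * T J) := mul_le_mul_of_nonneg_left ih hr0.le
        _ = r ^ (m+1) * T J := by ring
  have habound : ∀ m : ℕ, a (J+1+m) ≤ T J * r ^ m := by
    intro m
    have h1 : a (J+m+1+0) ≤ T (J+m) :=
      Summable.le_tsum (htail (J+m+1)) 0 (fun i _ => (hapos _).le)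
    have h2 : a (J+1+m) ≤ T (J+m) := by
      have : J+m+1+0 = J+1+m := by omega
      rwa [this] at h1
    calc a (J+1+m) ≤ T (J+m) := h2
      _ ≤ r ^ m * T J := hTgeo m
      _ = T J * r ^ m := by ring
  -- conclude
  intro α hα hα1
  have hterm : ∀ j : ℕ, ν ((2:ℝ) ^ (-((j:ℤ) + 1))) = a (j+1) := by
    intro j
    show ν ((2:ℝ) ^ (-((j:ℤ) + 1))) = ν ((2:ℝ) ^ (-(((j+1:ℕ)):ℤ)))
    have e : (-((j:ℤ) + 1)) = -(((j+1:ℕ)):ℤ) := by push_cast; ring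
    rw [e]
  simp only [hterm]
  rw [← summable_nat_add_iff J]
  have hbound : ∀ m : ℕ, a (m + J + 1) ^ α ≤ (T J) ^ α * (r ^ α) ^ m := by
    intro m
    have hidx : m + J + 1 = J+1+m := by omega
    rw [hidx]
    have h1 : a (J+1+m) ^ α ≤ (T J * r ^ m) ^ α :=
      Real.rpow_le_rpow (hapos _).le (habound m) hα.le
    have h2 : (T J * r ^ m) ^ α = (T J) ^ α * (r ^ α) ^ m := by
      rw [Real.mul_rpow (hT_nonneg J) (pow_nonneg hr0.le m)]
      congr 1
      rw [← Real.rpow_natCast r m, ← Real.rpow_mul hr0.le, mul_comm,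
        Real.rpow_mul hr0.le, Real.rpow_natCast]
    rw [h2] at h1
    exact h1
  have hgeo : Summable (fun m : ℕ => (T J) ^ α * (r ^ α) ^ m) :=
    (summable_geometric_of_lt_one (Real.rpow_nonneg hr0.le α)
      (Real.rpow_lt_one hr0.le hr1 hα)).mul_left _
  exact Summable.of_nonneg_of_le (fun m => Real.rpow_nonneg (hapos _).le α) hbound hgeo
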